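/- Let n₁ ≥ 1 be an integer and b₁,…,b_{n₁} ∈ ℝ. For each integer k ≥ 1 define s_k(x) := Σ_{i=1}^{n₁} (x + bᵢ)^{−k} for x ∈ ℝ with x + bᵢ ≠ 0 for all i. Suppose that the function Q := −4s₁⁵s₂ + 12s₁³s₂² − 18s₁⁴s₃ + 63s₁²s₂s₃ + 54s₂²s₃ + 162s₁s₃² − 27s₁³s₄ − 162s₁s₂s₄ vanishes for every x in its domain. Then n₁ = 3 and b₁ = b₂ = b₃. -/

import Mathlib

open Filter Topology

lemma keyLimit {l : Filter ℝ} [l.NeBot] {g s1 s2 s3 s4 : ℝ → ℝ} {m : ℝ}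
    (t1 : Tendsto (fun x => g x * s1 x) l (𝓝 m))
    (t2 : Tendsto (fun x => g x ^ 2 * s2 x) l (𝓝 m))
    (t3 : Tendsto (fun x => g x ^ 3 * s3 x) l (𝓝 m))
    (t4 : Tendsto (fun x => g x ^ 4 * s4 x) l (𝓝 m))
    (hq : ∀ᶠ x in l,
      -4 * s1 x ^ 5 * s2 x + 12 * s1 x ^ 3 * s2 x ^ 2
        - 18 * s1 x ^ 4 * s3 x + 63 * s1 x ^ 2 * s2 x * s3 x
        + 54 * s2 x ^ 2 * s3 x + 162 * s1 x * s3 x ^ 2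
        - 27 * s1 x ^ 3 * s4 x - 162 * s1 x * s2 x * s4 x = 0) :
    -4 * m ^ 6 - 6 * m ^ 5 + 36 * m ^ 4 + 54 * m ^ 3 = 0 := by
  set φ : ℝ × ℝ × ℝ × ℝ → ℝ := fun p =>
    -4 * p.1 ^ 5 * p.2.1 + 12 * p.1 ^ 3 * p.2.1 ^ 2 - 18 * p.1 ^ 4 * p.2.2.1
      + 63 * p.1 ^ 2 * p.2.1 * p.2.2.1 + 54 * p.2.1 ^ 2 * p.2.2.1
      + 162 * p.1 * p.2.2.1 ^ 2 - 27 * p.1 ^ 3 * p.2.2.2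
      - 162 * p.1 * p.2.1 * p.2.2.2 with hφdef
  have hφ : Continuous φ := by fun_prop
  have hT : Tendsto (fun x => φ (g x * s1 x, g x ^ 2 * s2 x, g x ^ 3 * s3 x, g x ^ 4 * s4 x))
      l (𝓝 (φ (m, m, m, m))) :=
    (hφ.tendsto (m, m, m, m)).comp (by
      rw [nhds_prod_eq, nhds_prod_eq, nhds_prod_eq]
      exact t1.prodMk (t2.prodMk (t3.prodMk t4)))
  have h0 : Tendsto (fun x => φ (g x * s1 x, g x ^ 2 * s2 x, g x ^ 3 * s3 x, g x ^ 4 * s4 x))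
      l (𝓝 0) := by
    apply Tendsto.congr' _ tendsto_const_nhds
    filter_upwards [hq] with x hx
    simp only [hφdef]
    linear_combination (-(g x ^ 7)) * hx
  have := tendsto_nhds_unique h0 hT
  simp only [hφdef] at this
  linear_combination -this

lemma cube_eq (m : ℕ) (hm : 1 ≤ m)
    (h : -4 * (m : ℝ) ^ 6 - 6 * (m : ℝ) ^ 5 + 36 * (m : ℝ) ^ 4 + 54 * (m : ℝ) ^ 3 = 0) :
    m = 3 := by
  have hm' : (1 : ℝ) ≤ (m : ℝ) := by exact_mod_cast hm
  have h9 : ((m:ℝ) ^ 2 - 9) * (2 * (m:ℝ) ^ 3 * (2 * (m:ℝ) + 3)) = 0 := by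
    linear_combination -h
  have hpos : 0 < 2 * (m:ℝ) ^ 3 * (2 * (m:ℝ) + 3) := by positivity
  have h9' : (m:ℝ) ^ 2 = 9 := by
    rcases mul_eq_zero.1 h9 with h' | h'
    · linarith
    · exact absurd h' (ne_of_gt hpos)
  have h3 : ((m:ℝ) - 3) * ((m:ℝ) + 3) = 0 := by linear_combination h9'
  rcases mul_eq_zero.1 h3 with h' | h'
  · have : (m:ℝ) = 3 := by linarith
    exact_mod_cast this
  · linarith

lemma tendsto_term_atTop (c : ℝ) (k : ℕ) :
    Tendsto (fun x : ℝ => (x * (x + c)⁻¹) ^ k) atTop (𝓝 1) := by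
  have h0 : Tendsto (fun x : ℝ => (x + c)⁻¹) atTop (𝓝 0) :=
    tendsto_inv_atTop_zero.comp (tendsto_atTop_add_const_right atTop c tendsto_id)
  have h1 : Tendsto (fun x : ℝ => 1 - c * (x + c)⁻¹) atTop (𝓝 1) := by
    simpa using tendsto_const_nhds.sub (tendsto_const_nhds.mul h0)
  have h2 : Tendsto (fun x : ℝ => x * (x + c)⁻¹) atTop (𝓝 1) := by
    apply h1.congr'
    filter_upwards [eventually_gt_atTop (-c)] with x hx
    have hne : x + c ≠ 0 := by linarith
    field_simp
    ring
  simpa using h2.pow k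

lemma tendsto_sum_atTop (n : ℕ) (b : Fin n → ℝ) (k : ℕ) :
    Tendsto (fun x : ℝ => x ^ k * ∑ i, ((x + b i)⁻¹) ^ k) atTop (𝓝 n) := by
  have h : Tendsto (fun x : ℝ => ∑ i : Fin n, (x * (x + b i)⁻¹) ^ k) atTop
      (𝓝 (∑ _i : Fin n, (1 : ℝ))) :=
    tendsto_finset_sum _ (fun i _ => tendsto_term_atTop (b i) k)
  simp only [Finset.sum_const, Finset.card_univ, Fintype.card_fin, nsmul_eq_mul, mul_one] at h
  apply h.congr
  intro x
  rw [Finset.mul_sum]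
  congr 1; ext i; rw [mul_pow]

lemma tendsto_sum_pole (n : ℕ) (b : Fin n → ℝ) (c : ℝ) (k : ℕ) (hk : 1 ≤ k) :
    Tendsto (fun x : ℝ => (x + c) ^ k * ∑ i, ((x + b i)⁻¹) ^ k)
      (𝓝[{x | ∀ i, x + b i ≠ 0}] (-c))
      (𝓝 ((Finset.univ.filter (fun i => b i = c)).card)) := by
  set l := 𝓝[{x : ℝ | ∀ i, x + b i ≠ 0}] (-c) with hl
  have h : Tendsto (fun x : ℝ => ∑ i : Fin n, ((x + c) * (x + b i)⁻¹) ^ k) l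
      (𝓝 (∑ i : Fin n, if b i = c then (1 : ℝ) else 0)) := by
    apply tendsto_finset_sum
    intro i _
    by_cases hbc : b i = c
    · rw [if_pos hbc]
      apply Tendsto.congr' _ tendsto_const_nhds
      filter_upwards [self_mem_nhdsWithin] with x hx
      have hne : x + b i ≠ 0 := hx i
      rw [hbc] at hne ⊢
      rw [mul_inv_cancel₀ hne, one_pow]
    · rw [if_neg hbc]
      have hcont : ContinuousAt (fun x : ℝ => ((x + c) * (x + b i)⁻¹) ^ k) (-c) := by
        apply ContinuousAt.pow
        apply ContinuousAt.mul (by fun_prop)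
        apply ContinuousAt.inv₀ (by fun_prop)
        intro h0
        apply hbc
        linarith [h0]
      have hval : ((-c + c) * (-c + b i)⁻¹) ^ k = 0 := by
        rw [neg_add_cancel, zero_mul, zero_pow (by omega)]
      have ht := hcont.tendsto
      rw [hval] at ht
      exact ht.mono_left nhdsWithin_le_nhds
  rw [Finset.sum_boole] at h
  apply h.congr
  intro x
  rw [Finset.mul_sum]
  congr 1; ext i; rw [mul_pow]

/-- If the rational expression `Q` in the power sums `s_k(x) = Σᵢ (x + bᵢ)⁻ᵏ`
vanishes identically, then `n₁ = 3` and all the `bᵢ` are equal. -/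
theorem stmt_18 (n₁ : ℕ) (hn : 1 ≤ n₁) (b : Fin n₁ → ℝ)
    (s : ℕ → ℝ → ℝ) (hs : ∀ k x, s k x = ∑ i, ((x + b i)⁻¹) ^ k)
    (hQ : ∀ x : ℝ, (∀ i, x + b i ≠ 0) →
      -4 * (s 1 x) ^ 5 * s 2 x + 12 * (s 1 x) ^ 3 * (s 2 x) ^ 2
        - 18 * (s 1 x) ^ 4 * s 3 x + 63 * (s 1 x) ^ 2 * s 2 x * s 3 x
        + 54 * (s 2 x) ^ 2 * s 3 x + 162 * s 1 x * (s 3 x) ^ 2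
        - 27 * (s 1 x) ^ 3 * s 4 x - 162 * s 1 x * s 2 x * s 4 x = 0) :
    n₁ = 3 ∧ ∀ i j, b i = b j := by
  have hsk : ∀ (k : ℕ) (g : ℝ → ℝ) (l : Filter ℝ) (m : ℝ),
      Tendsto (fun x => g x ^ k * ∑ i, ((x + b i)⁻¹) ^ k) l (𝓝 m) →
      Tendsto (fun x => g x ^ k * s k x) l (𝓝 m) := by
    intro k g l m h
    apply h.congr
    intro x
    rw [hs]
  -- Step 1 : n₁ = 3
  have hDtop : ∀ᶠ x : ℝ in atTop, ∀ i, x + b i ≠ 0 := by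
    rw [eventually_all]
    intro i
    filter_upwards [eventually_gt_atTop (-(b i))] with x hx h
    linarith
  have hqtop := hDtop.mono fun x hx => hQ x hx
  have T : ∀ k : ℕ, Tendsto (fun x : ℝ => x ^ k * s k x) atTop (𝓝 (n₁ : ℝ)) :=
    fun k => hsk k id atTop _ (tendsto_sum_atTop n₁ b k)
  have hvaltop : -4 * (n₁ : ℝ) ^ 6 - 6 * (n₁ : ℝ) ^ 5 + 36 * (n₁ : ℝ) ^ 4 + 54 * (n₁ : ℝ) ^ 3 = 0 := by
    refine keyLimit (g := fun x : ℝ => x) ?_ (T 2) (T 3) (T 4) hqtop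
    simpa [pow_one] using T 1
  have hn3 : n₁ = 3 := cube_eq n₁ hn hvaltop
  refine ⟨hn3, fun i j => ?_⟩
  -- Step 2 : all b's equal
  set D : Set ℝ := {x | ∀ i, x + b i ≠ 0} with hDdef
  have hdense : Dense D := by
    have hc : (Set.range fun i : Fin n₁ => -b i).Countable :=
      (Set.finite_range _).countable
    have hcompl := hc.dense_compl ℝ
    convert hcompl using 1
    ext x
    simp only [hDdef, Set.mem_setOf_eq, Set.mem_compl_iff, Set.mem_range, not_exists]
    constructor
    · intro h i hx
      exact h i (by rw [← hx]; ring)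
    · intro h i hx
      exact h i (by linarith)
  set c := b i with hc
  haveI : (𝓝[D] (-c)).NeBot :=
    mem_closure_iff_nhdsWithin_neBot.1 (hdense (-c))
  set m := (Finset.univ.filter (fun k => b k = c)).card with hm
  have hqP : ∀ᶠ x in 𝓝[D] (-c),
      -4 * (s 1 x) ^ 5 * s 2 x + 12 * (s 1 x) ^ 3 * (s 2 x) ^ 2
        - 18 * (s 1 x) ^ 4 * s 3 x + 63 * (s 1 x) ^ 2 * s 2 x * s 3 x
        + 54 * (s 2 x) ^ 2 * s 3 x + 162 * s 1 x * (s 3 x) ^ 2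
        - 27 * (s 1 x) ^ 3 * s 4 x - 162 * s 1 x * s 2 x * s 4 x = 0 := by
    filter_upwards [self_mem_nhdsWithin] with x hx
    exact hQ x hx
  have TP : ∀ k : ℕ, 1 ≤ k →
      Tendsto (fun x : ℝ => (x + c) ^ k * s k x) (𝓝[D] (-c)) (𝓝 (m : ℝ)) :=
    fun k hk => hsk k (fun x => x + c) _ _ (tendsto_sum_pole n₁ b c k hk)
  have hvalP : -4 * (m : ℝ) ^ 6 - 6 * (m : ℝ) ^ 5 + 36 * (m : ℝ) ^ 4 + 54 * (m : ℝ) ^ 3 = 0 := by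
    refine keyLimit (g := fun x : ℝ => x + c) ?_ (TP 2 one_le_two) (TP 3 (by norm_num))
      (TP 4 (by norm_num)) hqP
    simpa [pow_one] using TP 1 le_rfl
  have hm1 : 1 ≤ m := by
    rw [hm]
    apply Finset.card_pos.2
    exact ⟨i, by simp [hc]⟩
  have hm3 : m = 3 := cube_eq m hm1 hvalP
  have huniv : Finset.univ.filter (fun k => b k = c) = Finset.univ := by
    apply Finset.eq_univ_of_card
    rw [← hm, hm3, hn3, Fintype.card_fin]
  have hj : j ∈ Finset.univ.filter (fun k => b k = c) := by
    rw [huniv]; exact Finset.mem_univ j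
  exact (Finset.mem_filter.1 hj).2.symm
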